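/- The area A_v = (v_0^4 + 3(v_m^2 + 2 a_m((t_f - t_full)v_m + x_0))^2)/(24 a_m^2 v_0) + C (where C does not depend on v_0) is a decreasing function of v_0 on (0, v_m], provided (t_f - t_full)v_m + v_m^2/a_m ≤ |x_0|. Consequently A_v is minimized over v_0 ∈ (0, v_m] at v_0 = v_m. -/

import Mathlib

/-- The area `A_v`, as a function of the initial speed `v_0`, is decreasing on
`(0, v_m]` under the no-overcrowding condition, hence minimized at `v_0 = v_m`. -/
theorem area_decreasing_in_initial_speed
    (a_m v_m x_0 t_full t_f C : ℝ) (f : ℝ → ℝ)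
    (ha : 0 < a_m) (hv : 0 < v_m) (hx0 : x_0 < 0) (ht : t_full ≤ t_f)
    (hnoc : (t_f - t_full) * v_m + 2 * (v_m ^ 2 / (2 * a_m)) ≤ |x_0|)
    (hf : ∀ v, f v =
      (v ^ 4 + 3 * (v_m ^ 2 + 2 * a_m * ((t_f - t_full) * v_m + x_0)) ^ 2) /
        (24 * a_m ^ 2 * v) + C) :
    (∀ v_0 ∈ Set.Ioc (0 : ℝ) v_m, deriv f v_0 ≤ 0) ∧
    (∀ v_0 ∈ Set.Ioc (0 : ℝ) v_m, f v_m ≤ f v_0) := by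
  set K : ℝ := v_m ^ 2 + 2 * a_m * ((t_f - t_full) * v_m + x_0) with hKdef
  have habs : |x_0| = -x_0 := abs_of_neg hx0
  rw [habs] at hnoc
  have hK : K ≤ -(v_m ^ 2) := by
    have h2a : (0:ℝ) < 2 * a_m := by linarith
    have : 2 * (v_m ^ 2 / (2 * a_m)) = v_m ^ 2 / a_m := by
      field_simp
    rw [this] at hnoc
    have := (div_le_iff₀ ha).mp (by linarith : v_m ^ 2 / a_m ≤ -x_0 - (t_f - t_full) * v_m)
    nlinarith
  have hKsq : v_m ^ 4 ≤ K ^ 2 := by nlinarith [sq_nonneg v_m]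
  have hfeq : f = fun v => (v ^ 4 + 3 * K ^ 2) / (24 * a_m ^ 2 * v) + C := by
    funext v; rw [hf v]
  constructor
  · intro v_0 hv0
    obtain ⟨hv0p, hv0m⟩ := hv0
    have hden : 24 * a_m ^ 2 * v_0 ≠ 0 := by positivity
    have hu : HasDerivAt (fun v : ℝ => v ^ 4 + 3 * K ^ 2) (4 * v_0 ^ 3) v_0 := by
      simpa using ((hasDerivAt_pow 4 v_0).add_const (3 * K ^ 2))
    have hw : HasDerivAt (fun v : ℝ => 24 * a_m ^ 2 * v) (24 * a_m ^ 2) v_0 := by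
      simpa using (hasDerivAt_id v_0).const_mul (24 * a_m ^ 2)
    have hd : HasDerivAt f
        ((4 * v_0 ^ 3 * (24 * a_m ^ 2 * v_0) - (v_0 ^ 4 + 3 * K ^ 2) * (24 * a_m ^ 2)) /
          (24 * a_m ^ 2 * v_0) ^ 2) v_0 := by
      rw [hfeq]
      exact (hu.div hw hden).add_const C
    rw [hd.deriv]
    apply div_nonpos_of_nonpos_of_nonneg
    · nlinarith [pow_le_pow_left₀ hv0p.le hv0m 4, sq_nonneg a_m]
    · positivity
  · intro v_0 hv0
    obtain ⟨hv0p, hv0m⟩ := hv0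
    rw [hf v_0, hf v_m]
    have h1 : (0:ℝ) < 24 * a_m ^ 2 * v_m := by positivity
    have h2 : (0:ℝ) < 24 * a_m ^ 2 * v_0 := by positivity
    have hsub : 0 ≤ v_m - v_0 := by linarith
    have hb : 0 ≤ 3 * v_m ^ 3 - v_0 * v_m ^ 2 - v_0 ^ 2 * v_m - v_0 ^ 3 := by
      nlinarith [pow_le_pow_left₀ hv0p.le hv0m 3,
        mul_le_mul_of_nonneg_right hv0m (sq_nonneg v_m),
        mul_le_mul_of_nonneg_right (mul_le_mul hv0m hv0m hv0p.le hv.le) hv.le]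
    have h3 : v_0 * v_m * (v_m ^ 3 - v_0 ^ 3) ≤ 3 * v_m ^ 4 * (v_m - v_0) := by
      nlinarith [mul_nonneg (mul_nonneg hsub hv.le) hb]
    have h4 : 3 * v_m ^ 4 * (v_m - v_0) ≤ 3 * K ^ 2 * (v_m - v_0) := by
      nlinarith
    have key : (v_m ^ 4 + 3 * K ^ 2) * (24 * a_m ^ 2 * v_0) ≤
        (v_0 ^ 4 + 3 * K ^ 2) * (24 * a_m ^ 2 * v_m) := by
      nlinarith [sq_nonneg a_m]
    have := (div_le_div_iff₀ h1 h2).mpr key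
    linarith
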